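/- If H is a free abelian group, then the natural map from the Takasaki quandle T(H) to its enveloping group is injective, and T(H) is isomorphic to Q(G_{T(H)}, A) where A is a set of orbit representatives of cardinality |H : 2H|; moreover two elements x,y of T(H) lie in the same orbit if and only if x − y ∈ 2H. -/

import Mathlib

open Quandles

namespace GA

variable {G : Type*} [Group G]

/-- The equivalence relation on `A × G`: `(a, gh) ~ (a, h)` for `g ∈ C_G(a)`,
i.e. `(a,u) ~ (b,v)` iff `a = b` and `u * v⁻¹` centralizes `a`. -/
def rel (A : Set G) (p q : A × G) : Prop :=
  p.1 = q.1 ∧ p.2 * q.2⁻¹ ∈ Subgroup.centralizer ({(p.1 : G)} : Set G)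

theorem rel_equiv (A : Set G) : Equivalence (rel A) := by
  constructor
  · intro p
    exact ⟨rfl, by simpa using (Subgroup.centralizer ({(p.1 : G)} : Set G)).one_mem⟩
  · rintro p q ⟨h1, h2⟩
    refine ⟨h1.symm, ?_⟩
    have := (Subgroup.centralizer ({(p.1 : G)} : Set G)).inv_mem h2
    simpa [h1] using this
  · rintro p q r ⟨h1, h2⟩ ⟨h1', h2'⟩
    refine ⟨h1.trans h1', ?_⟩
    have := (Subgroup.centralizer ({(p.1 : G)} : Set G)).mul_mem h2 (by rw [h1]; exact h2')
    simpa [mul_assoc] using this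

instance setoid (A : Set G) : Setoid (A × G) := ⟨rel A, rel_equiv A⟩

/-- The `(G,A)`-quandle as a set: the quotient of `A × G` by `(a,gh) ~ (a,h)`, `g ∈ C_G(a)`. -/
def Q (G : Type*) [Group G] (A : Set G) : Type _ := Quotient (setoid A)

/-- The class of `(a,u)` in `Q(G,A)`. -/
def mk {A : Set G} (a : A) (u : G) : Q G A := Quotient.mk (setoid A) (a, u)

/-- representative-level operation `(a,u) * (b,v) = (a, u v⁻¹ b v)`,
written as a left action of `(b,v)` on `(a,u)`. -/
def pop {A : Set G} (x y : A × G) : A × G := (y.1, y.2 * x.2⁻¹ * (x.1 : G) * x.2)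

/-- representative-level inverse operation `(a,u) *⁻¹ (b,v) = (a, u v⁻¹ b⁻¹ v)`. -/
def pinv {A : Set G} (x y : A × G) : A × G := (y.1, y.2 * x.2⁻¹ * (x.1 : G)⁻¹ * x.2)

theorem centralizer_mem_iff {a u : G} : u ∈ Subgroup.centralizer ({a} : Set G) ↔ u * a = a * u := by
  rw [Subgroup.mem_centralizer_singleton_iff]

theorem conj_indep {b v d : G} (h : d * b = b * d) : ((d * v))⁻¹ * b * (d * v) = v⁻¹ * b * v := by
  have h' : d⁻¹ * b * d = b := by
    rw [mul_assoc, ← h]; group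
  calc (d * v)⁻¹ * b * (d * v) = v⁻¹ * (d⁻¹ * b * d) * v := by group
    _ = v⁻¹ * b * v := by rw [h']

theorem pop_well {A : Set G} : ∀ (x₁ y₁ x₂ y₂ : A × G), rel A x₁ x₂ → rel A y₁ y₂ →
    rel A (pop x₁ y₁) (pop x₂ y₂) := by
  rintro ⟨b₁, v₁⟩ ⟨a₁, u₁⟩ ⟨b₂, v₂⟩ ⟨a₂, u₂⟩ ⟨hb, hv⟩ ⟨ha, hu⟩
  refine ⟨ha, ?_⟩
  simp only [pop]
  rw [centralizer_mem_iff] at hv hu ⊢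
  have hb' : (b₁ : G) = (b₂ : G) := congrArg _ hb
  have key : v₁⁻¹ * (b₁ : G) * v₁ = v₂⁻¹ * (b₂ : G) * v₂ := by
    conv_lhs => rw [show v₁ = (v₁ * v₂⁻¹) * v₂ by group, hb']
    exact conj_indep (by rw [← hb']; exact hv)
  have heq : u₁ * v₁⁻¹ * (b₁:G) * v₁ * (u₂ * v₂⁻¹ * (b₂:G) * v₂)⁻¹ = u₁ * u₂⁻¹ := by
    calc u₁ * v₁⁻¹ * (b₁:G) * v₁ * (u₂ * v₂⁻¹ * (b₂:G) * v₂)⁻¹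
        = u₁ * (v₁⁻¹ * (b₁:G) * v₁) * (v₂⁻¹ * (b₂:G) * v₂)⁻¹ * u₂⁻¹ := by group
      _ = u₁ * (v₂⁻¹ * (b₂:G) * v₂) * (v₂⁻¹ * (b₂:G) * v₂)⁻¹ * u₂⁻¹ := by rw [key]
      _ = u₁ * u₂⁻¹ := by group
  rw [heq]
  exact hu

theorem pinv_well {A : Set G} : ∀ (x₁ y₁ x₂ y₂ : A × G), rel A x₁ x₂ → rel A y₁ y₂ →
    rel A (pinv x₁ y₁) (pinv x₂ y₂) := by
  rintro ⟨b₁, v₁⟩ ⟨a₁, u₁⟩ ⟨b₂, v₂⟩ ⟨a₂, u₂⟩ ⟨hb, hv⟩ ⟨ha, hu⟩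
  refine ⟨ha, ?_⟩
  simp only [pinv]
  rw [centralizer_mem_iff] at hv hu ⊢
  have hb' : (b₁ : G) = (b₂ : G) := congrArg _ hb
  have hvc : (v₁ * v₂⁻¹) * (b₂ : G)⁻¹ = (b₂ : G)⁻¹ * (v₁ * v₂⁻¹) := by
    have : Commute (v₁ * v₂⁻¹) (b₂ : G) := by rw [← hb']; exact hv
    exact this.inv_right
  have key : v₁⁻¹ * (b₁ : G)⁻¹ * v₁ = v₂⁻¹ * (b₂ : G)⁻¹ * v₂ := by
    conv_lhs => rw [show v₁ = (v₁ * v₂⁻¹) * v₂ by group, hb']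
    exact conj_indep hvc
  have heq : u₁ * v₁⁻¹ * (b₁:G)⁻¹ * v₁ * (u₂ * v₂⁻¹ * (b₂:G)⁻¹ * v₂)⁻¹ = u₁ * u₂⁻¹ := by
    calc u₁ * v₁⁻¹ * (b₁:G)⁻¹ * v₁ * (u₂ * v₂⁻¹ * (b₂:G)⁻¹ * v₂)⁻¹
        = u₁ * (v₁⁻¹ * (b₁:G)⁻¹ * v₁) * (v₂⁻¹ * (b₂:G)⁻¹ * v₂)⁻¹ * u₂⁻¹ := by group
      _ = u₁ * (v₂⁻¹ * (b₂:G)⁻¹ * v₂) * (v₂⁻¹ * (b₂:G)⁻¹ * v₂)⁻¹ * u₂⁻¹ := by rw [key]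
      _ = u₁ * u₂⁻¹ := by group
  rw [heq]
  exact hu

instance quandle (G : Type*) [Group G] (A : Set G) : Quandle (Q G A) where
  act := Quotient.map₂ pinv (fun _ _ h _ _ h' => pinv_well _ _ _ _ h h')
  invAct := Quotient.map₂ pop (fun _ _ h _ _ h' => pop_well _ _ _ _ h h')
  self_distrib := by
    rintro ⟨⟨b,v⟩⟩ ⟨⟨c,w⟩⟩ ⟨⟨a,u⟩⟩
    refine Quotient.sound ⟨rfl, ?_⟩
    simp only [pinv]
    rw [centralizer_mem_iff]
    group
  left_inv := by
    rintro ⟨⟨b,v⟩⟩ ⟨⟨a,u⟩⟩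
    refine Quotient.sound ⟨rfl, ?_⟩
    simp only [pop, pinv]
    rw [centralizer_mem_iff]
    group
  right_inv := by
    rintro ⟨⟨b,v⟩⟩ ⟨⟨a,u⟩⟩
    refine Quotient.sound ⟨rfl, ?_⟩
    simp only [pop, pinv]
    rw [centralizer_mem_iff]
    group
  fix := by
    rintro ⟨⟨a,u⟩⟩
    refine Quotient.sound ⟨rfl, ?_⟩
    simp only [pinv]
    rw [centralizer_mem_iff]
    have : (u * u⁻¹ * (a:G)⁻¹ * u) * u⁻¹ = (a : G)⁻¹ := by group
    rw [this]
    group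

@[simp] theorem invAct_mk {A : Set G} (a b : A) (u v : G) :
    Rack.invAct (mk b v) (mk a u) = mk a (u * v⁻¹ * (b : G) * v) := rfl

@[simp] theorem act_mk {A : Set G} (a b : A) (u v : G) :
    Shelf.act (mk b v) (mk a u) = mk a (u * v⁻¹ * (b : G)⁻¹ * v) := rfl

end GA

/-- Two elements of a rack lie in the same orbit under the inner automorphism group iff they
are related by the equivalence relation generated by `a ~ x ◃ a` and `a ~ x ◃⁻¹ a`. -/
def sameOrbit (Q : Type*) [Rack Q] : Q → Q → Prop :=
  Relation.EqvGen (fun a b => ∃ x : Q, b = x ◃ a ∨ b = x ◃⁻¹ a)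

/-- The Takasaki quandle of an abelian group `H`: the operation is `x * y = 2y - x`,
i.e. `y` acts on `x` by `x ↦ 2y - x`. -/
instance takasaki (H : Type*) [AddCommGroup H] : Quandle H where
  act y x := y + y - x
  invAct y x := y + y - x
  self_distrib := by intros; (try dsimp only); abel1
  left_inv := by intro x y; dsimp only; abel1
  right_inv := by intro x y; dsimp only; abel1
  fix := by intro x; (try dsimp only); abel1

/-- The subgroup `2H` of an abelian group `H`. -/
def twoH (H : Type*) [AddCommGroup H] : AddSubgroup H :=
  AddMonoidHom.range (AddMonoidHom.mk' (fun h : H => h + h) (fun a b => by abel))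


namespace TakAux

variable {H : Type*} [AddCommGroup H]

/-- abbreviation for the natural map to the enveloping group -/
def th (H : Type*) [AddCommGroup H] : H → Rack.EnvelGroup H :=
  fun x => Rack.toEnvelGroup H x

theorem tak_act (x y : H) : x ◃ y = x + x - y := rfl

theorem tak_invAct (x y : H) : x ◃⁻¹ y = x + x - y := rfl

theorem mem_twoH {x : H} : x ∈ twoH H ↔ ∃ h : H, h + h = x := by
  simp [twoH, AddMonoidHom.mem_range, AddMonoidHom.mk'_apply]

theorem sameOrbit_iff (x y : H) : sameOrbit H x y ↔ x - y ∈ twoH H := by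
  constructor
  · intro h
    induction h with
    | rel a b hab =>
      obtain ⟨z, hz | hz⟩ := hab
      · rw [hz, tak_act]
        exact mem_twoH.mpr ⟨a - z, by abel⟩
      · rw [hz, tak_invAct]
        exact mem_twoH.mpr ⟨a - z, by abel⟩
    | refl a => exact mem_twoH.mpr ⟨0, by abel⟩
    | symm a b _ ih => simpa using (twoH H).neg_mem ih
    | trans a b c _ _ ih1 ih2 => simpa using (twoH H).add_mem ih1 ih2
  · intro h
    obtain ⟨k, hk⟩ := mem_twoH.mp h
    refine Relation.EqvGen.rel _ _ ⟨x - k, Or.inl ?_⟩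
    have hy : y = x - (k + k) := by rw [hk]; abel
    rw [tak_act, hy]
    abel

theorem theta_conj (x y : H) : th H x * th H y * (th H x)⁻¹ = th H (x + x - y) := by
  have := (Rack.toEnvelGroup H).map_act (x := x) (y := y)
  rw [Quandle.conj_act_eq_conj] at this
  exact this.symm

theorem theta_conj_inv (x y : H) : (th H x)⁻¹ * th H y * th H x = th H (x + x - y) := by
  have h := theta_conj x (x + x - y)
  have h2 : x + x - (x + x - y) = y := by abel
  rw [h2] at h
  rw [← h]
  group

theorem theta_inj [Module.Free ℤ H] : Function.Injective (th H) := by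
  intro x y h
  have h2 : Rack.envelAction (th H x) (0 : H) = Rack.envelAction (th H y) (0 : H) := by rw [h]
  have h3 : x + x = y + y := by
    simpa [th, Rack.envelAction_prop, tak_act] using h2
  have h4 : (2 : ℤ) • x = (2 : ℤ) • y := by rw [two_zsmul, two_zsmul]; exact h3
  exact smul_right_injective H (by norm_num) h4

/-- class of a `PreEnvelGroup` element in the enveloping group -/
def mkE (w : Rack.PreEnvelGroup H) : Rack.EnvelGroup H := ⟦w⟧

theorem mkE_one : (mkE Rack.PreEnvelGroup.unit : Rack.EnvelGroup H) = 1 := rfl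

theorem mkE_incl (x : H) : mkE (Rack.PreEnvelGroup.incl x) = th H x := rfl

theorem mkE_mul (p q : Rack.PreEnvelGroup H) : mkE (p.mul q) = mkE p * mkE q := rfl

theorem mkE_inv (p : Rack.PreEnvelGroup H) : mkE p.inv = (mkE p)⁻¹ := rfl

theorem conj_theta_pre (w : Rack.PreEnvelGroup H) :
    (∀ a : H, ∃ b : H, b - a ∈ twoH H ∧ (mkE w)⁻¹ * th H a * mkE w = th H b) ∧
    (∀ a : H, ∃ b : H, b - a ∈ twoH H ∧ mkE w * th H a * (mkE w)⁻¹ = th H b) := by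
  induction w with
  | unit =>
    rw [mkE_one]
    constructor <;> exact fun a => ⟨a, by simpa using mem_twoH.mpr ⟨0, by abel⟩, by group⟩
  | incl x =>
    rw [mkE_incl]
    constructor <;> intro a <;> refine ⟨x + x - a, mem_twoH.mpr ⟨x - a, by abel⟩, ?_⟩
    · exact theta_conj_inv x a
    · exact theta_conj x a
  | mul p q ihp ihq =>
    rw [mkE_mul]
    constructor <;> intro a
    · obtain ⟨b, hb, hb2⟩ := ihp.1 a
      obtain ⟨c, hc, hc2⟩ := ihq.1 b
      refine ⟨c, by simpa using (twoH H).add_mem hc hb, ?_⟩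
      rw [← hc2, ← hb2]; group
    · obtain ⟨b, hb, hb2⟩ := ihq.2 a
      obtain ⟨c, hc, hc2⟩ := ihp.2 b
      refine ⟨c, by simpa using (twoH H).add_mem hc hb, ?_⟩
      rw [← hc2, ← hb2]; group
  | inv p ihp =>
    rw [mkE_inv]
    constructor <;> intro a
    · obtain ⟨b, hb, hb2⟩ := ihp.2 a
      exact ⟨b, hb, by rw [← hb2]; group⟩
    · obtain ⟨b, hb, hb2⟩ := ihp.1 a
      exact ⟨b, hb, by rw [← hb2]; group⟩

theorem conj_theta (u : Rack.EnvelGroup H) :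
    (∀ a : H, ∃ b : H, b - a ∈ twoH H ∧ u⁻¹ * th H a * u = th H b) ∧
    (∀ a : H, ∃ b : H, b - a ∈ twoH H ∧ u * th H a * u⁻¹ = th H b) := by
  obtain ⟨w, rfl⟩ := Quotient.exists_rep u
  exact conj_theta_pre w

section GroupLemmas

variable {G : Type*} [Group G]

theorem comm_of_conj_eq {u v m : G} (h : u⁻¹ * m * u = v⁻¹ * m * v) :
    u * v⁻¹ * m = m * (u * v⁻¹) := by
  have h2 : m = u * (v⁻¹ * m * v) * u⁻¹ := by rw [← h]; group
  conv_rhs => rw [h2]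
  group

theorem conj_eq_of_comm {u v m : G} (h : u * v⁻¹ * m = m * (u * v⁻¹)) :
    u⁻¹ * m * u = v⁻¹ * m * v := by
  have h2 : m = u * v⁻¹ * m * (v * u⁻¹) := by
    rw [h]; group
  conv_lhs => rw [h2]
  group

end GroupLemmas

section Reps

variable (A : Set H) (hA : ∀ q : H, ∃! a : H, a ∈ A ∧ sameOrbit H a q)

/-- the chosen orbit representative -/
noncomputable def rep (q : H) : H := (hA q).choose

theorem rep_mem (q : H) : rep A hA q ∈ A := (hA q).choose_spec.1.1

theorem rep_orbit (q : H) : sameOrbit H (rep A hA q) q := (hA q).choose_spec.1.2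

theorem rep_uniq {a q : H} (ha : a ∈ A) (h : sameOrbit H a q) : a = rep A hA q :=
  (hA q).choose_spec.2 a ⟨ha, h⟩

/-- half of `rep q - q` -/
noncomputable def half (q : H) : H :=
  (mem_twoH.mp ((sameOrbit_iff _ _).mp (rep_orbit A hA q))).choose

theorem half_spec (q : H) : half A hA q + half A hA q = rep A hA q - q :=
  (mem_twoH.mp ((sameOrbit_iff _ _).mp (rep_orbit A hA q))).choose_spec

/-- the isomorphism -/
noncomputable def fdef (q : H) : GA.Q (Rack.EnvelGroup H) (th H '' A) :=
  GA.mk ⟨th H (rep A hA q), ⟨rep A hA q, rep_mem A hA q, rfl⟩⟩ (th H (rep A hA q - half A hA q))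

theorem key_conj (q : H) :
    (th H (rep A hA q - half A hA q))⁻¹ * th H (rep A hA q) * th H (rep A hA q - half A hA q)
      = th H q := by
  rw [theta_conj_inv]
  congr 1
  have h2 : (rep A hA q - half A hA q) + (rep A hA q - half A hA q) - rep A hA q
      = rep A hA q - (half A hA q + half A hA q) := by abel
  rw [h2, half_spec]
  abel


theorem fdef_inj [Module.Free ℤ H] : Function.Injective (fdef A hA) := by
  intro q q' h
  obtain ⟨h1, h2⟩ := Quotient.exact h
  have hm : th H (rep A hA q) = th H (rep A hA q') := congrArg Subtype.val h1
  have h2' : th H (rep A hA q - half A hA q) * (th H (rep A hA q' - half A hA q'))⁻¹ *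
      th H (rep A hA q) = th H (rep A hA q) *
      (th H (rep A hA q - half A hA q) * (th H (rep A hA q' - half A hA q'))⁻¹) :=
    GA.centralizer_mem_iff.mp h2
  have h3 := conj_eq_of_comm h2'
  rw [key_conj A hA q, hm, key_conj A hA q'] at h3
  exact theta_inj h3

theorem fdef_surj : Function.Surjective (fdef A hA) := by
  intro z
  obtain ⟨⟨⟨g, hg⟩, u⟩, rfl⟩ := Quotient.exists_rep z
  obtain ⟨a, haA, hag⟩ := hg
  obtain ⟨b, hb2H, hbconj⟩ := (conj_theta u).1 a
  have hsame : sameOrbit H a b := by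
    refine (sameOrbit_iff a b).mpr ?_
    have h2 : a - b = -(b - a) := by abel
    rw [h2]
    exact (twoH H).neg_mem hb2H
  have hrep : a = rep A hA b := rep_uniq A hA haA hsame
  refine ⟨b, Quotient.sound ⟨Subtype.ext ?_, ?_⟩⟩
  · show th H (rep A hA b) = g
    rw [← hrep]; exact hag
  · show th H (rep A hA b - half A hA b) * u⁻¹ ∈
      Subgroup.centralizer ({th H (rep A hA b)} : Set (Rack.EnvelGroup H))
    rw [GA.centralizer_mem_iff]
    apply comm_of_conj_eq
    rw [key_conj A hA b, ← hrep]
    exact hbconj.symm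

theorem fdef_hom (x y : H) :
    fdef A hA (x ◃ y) = Shelf.act (fdef A hA x) (fdef A hA y) := by
  have hrq : rep A hA y = rep A hA (x ◃ y) := by
    refine rep_uniq A hA (rep_mem A hA y) ?_
    refine Relation.EqvGen.trans _ _ _ (rep_orbit A hA y) ?_
    refine (sameOrbit_iff y (x ◃ y)).mpr ?_
    rw [tak_act]
    exact mem_twoH.mpr ⟨y - x, by abel⟩
  refine Quotient.sound ⟨Subtype.ext ?_, ?_⟩
  · show th H (rep A hA (x ◃ y)) = th H (rep A hA y)
    rw [hrq]
  · show th H (rep A hA (x ◃ y) - half A hA (x ◃ y)) *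
        (th H (rep A hA y - half A hA y) * (th H (rep A hA x - half A hA x))⁻¹ *
          (th H (rep A hA x))⁻¹ * th H (rep A hA x - half A hA x))⁻¹ ∈
      Subgroup.centralizer ({th H (rep A hA (x ◃ y))} : Set (Rack.EnvelGroup H))
    rw [GA.centralizer_mem_iff]
    apply comm_of_conj_eq
    rw [key_conj A hA (x ◃ y), ← hrq]
    have hW : th H (rep A hA y - half A hA y) * (th H (rep A hA x - half A hA x))⁻¹ *
        (th H (rep A hA x))⁻¹ * th H (rep A hA x - half A hA x)
        = th H (rep A hA y - half A hA y) * (th H x)⁻¹ := by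
      have e1 : (th H (rep A hA x - half A hA x))⁻¹ * (th H (rep A hA x))⁻¹ *
          th H (rep A hA x - half A hA x) = (th H x)⁻¹ := by
        rw [← key_conj A hA x]; group
      rw [← e1]; group
    rw [hW]
    have e3 : (th H (rep A hA y - half A hA y) * (th H x)⁻¹)⁻¹ * th H (rep A hA y) *
        (th H (rep A hA y - half A hA y) * (th H x)⁻¹)
        = th H x * ((th H (rep A hA y - half A hA y))⁻¹ * th H (rep A hA y) *
          th H (rep A hA y - half A hA y)) * (th H x)⁻¹ := by group
    rw [e3, key_conj A hA y, theta_conj x y]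
    rfl

theorem repEquiv (hB : ∀ q : H, ∃! a : H, a ∈ A ∧ sameOrbit H a q) :
    Nonempty (A ≃ (H ⧸ twoH H)) := by
  refine ⟨Equiv.ofBijective (fun a : A => QuotientAddGroup.mk (a : H)) ⟨?_, ?_⟩⟩
  · intro a a' h
    have h' : -(a : H) + a' ∈ twoH H := QuotientAddGroup.eq.mp h
    have h2 : (a' : H) - a ∈ twoH H := by
      have e : (a' : H) - a = -(a : H) + a' := by abel
      rw [e]; exact h'
    have hsame : sameOrbit H (a' : H) (a : H) := (sameOrbit_iff _ _).mpr h2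
    have h3 : (a' : H) = rep A hB a := rep_uniq A hB a'.2 hsame
    have h4 : (a : H) = rep A hB a :=
      rep_uniq A hB a.2 (Relation.EqvGen.refl _)
    exact Subtype.ext (h4.trans h3.symm)
  · intro z
    obtain ⟨q, rfl⟩ := QuotientAddGroup.mk_surjective z
    refine ⟨⟨rep A hB q, rep_mem A hB q⟩, ?_⟩
    refine QuotientAddGroup.eq.mpr ?_
    have h2 : -(rep A hB q) + q = -(rep A hB q - q) := by abel
    rw [h2]
    exact (twoH H).neg_mem ((sameOrbit_iff _ _).mp (rep_orbit A hB q))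

end Reps

end TakAux
/-- If `H` is a free abelian group then: the natural map `θ` from the Takasaki quandle `T(H)`
to its enveloping group is injective; two elements of `T(H)` lie in the same orbit iff their
difference lies in `2H`; and for any set `A` of orbit representatives, `T(H)` is isomorphic
to the `(G_{T(H)}, θ(A))`-quandle, with `A` of cardinality `|H : 2H|`. -/
theorem takasaki_free_abelian_GA (H : Type*) [AddCommGroup H] [Module.Free ℤ H] :
    Function.Injective (fun x : H => (Rack.toEnvelGroup H x : Rack.EnvelGroup H)) ∧
    (∀ x y : H, sameOrbit H x y ↔ x - y ∈ twoH H) ∧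
    ∀ A : Set H, (∀ q : H, ∃! a : H, a ∈ A ∧ sameOrbit H a q) →
      (∃ f : H ≃ GA.Q (Rack.EnvelGroup H)
          ((fun x : H => (Rack.toEnvelGroup H x : Rack.EnvelGroup H)) '' A),
        (∀ x y : H, f (x ◃ y) = f x ◃ f y)) ∧
      Nonempty (A ≃ (H ⧸ twoH H)) := by
  refine ⟨TakAux.theta_inj, fun x y => TakAux.sameOrbit_iff x y, fun A hA => ?_⟩
  exact ⟨⟨Equiv.ofBijective (TakAux.fdef A hA) ⟨TakAux.fdef_inj A hA, TakAux.fdef_surj A hA⟩,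
    fun x y => TakAux.fdef_hom A hA x y⟩, TakAux.repEquiv A hA⟩
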